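/- Let X ∈ St(n,r), let f : ℝ^{n×r} → ℝ be differentiable with L-Lipschitz gradient and ‖∇f(X)‖ ≤ ϱ, let h : ℝ^{n×r} → ℝ be convex and L_h-Lipschitz, and set F := f + h and c₂ := ϱM₂ + (1/2)LM₁² + L_hM₂ for constants M₁, M₂ > 0. Let B : ℝ^{n×r} → ℝ^{n×r} be self-adjoint for the trace inner product, map T_X into itself, and satisfy ⟨V,BV⟩ ≥ κ₁‖V‖² for all V ∈ T_X with κ₁ > 0. Let V* minimize φ(V) := ⟨∇f(X),V⟩ + (1/2)⟨V,BV⟩ + h(X+V) over T_X, and let R : T_X → ℝ^{n×r} be any map satisfying ‖R(ξ) − X‖ ≤ M₁‖ξ‖ and ‖R(ξ) − X − ξ‖ ≤ M₂‖ξ‖² for all ξ ∈ T_X. Let σ ∈ (0,1) and set ᾱ := min{1, (2−σ)κ₁/(2c₂)}. Then for every α with 0 < α ≤ ᾱ, F(R(αV*)) ≤ F(X) − (σα/2)⟨V*, B V*⟩. -/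

import Mathlib

open Matrix

/-- The trace inner product `⟨A, B⟩ = tr(AᵀB)` on `ℝ^{n×r}`. -/
noncomputable def tinner {n r : ℕ} (A B : Matrix (Fin n) (Fin r) ℝ) : ℝ := (Aᵀ * B).trace

/-- `V` belongs to the tangent space `T_X = {V : VᵀX + XᵀV = 0}` of the Stiefel manifold at `X`. -/
def IsTangent {n r : ℕ} (X V : Matrix (Fin n) (Fin r) ℝ) : Prop := Vᵀ * X + Xᵀ * V = 0

-- The norm `‖·‖` below is the Frobenius norm, associated to the trace inner product.
attribute [local instance] Matrix.frobeniusNormedAddCommGroup Matrix.frobeniusNormedSpace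

variable {n r : ℕ}

lemma tinner_eq_sum (A B : Matrix (Fin n) (Fin r) ℝ) :
    tinner A B = ∑ j, ∑ i, A i j * B i j := by
  simp [tinner, Matrix.trace, Matrix.mul_apply, Matrix.diag]

lemma tinner_add_right (A B C : Matrix (Fin n) (Fin r) ℝ) :
    tinner A (B + C) = tinner A B + tinner A C := by
  simp [tinner_eq_sum, Matrix.add_apply, mul_add, Finset.sum_add_distrib]

lemma tinner_smul_right (c : ℝ) (A B : Matrix (Fin n) (Fin r) ℝ) :
    tinner A (c • B) = c * tinner A B := by
  simp [tinner_eq_sum, Matrix.smul_apply, Finset.mul_sum, smul_eq_mul, mul_assoc, mul_left_comm]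

lemma tinner_smul_left (c : ℝ) (A B : Matrix (Fin n) (Fin r) ℝ) :
    tinner (c • A) B = c * tinner A B := by
  simp [tinner_eq_sum, Matrix.smul_apply, Finset.mul_sum, smul_eq_mul, mul_assoc, mul_left_comm]

lemma norm_sq_eq_tinner (A : Matrix (Fin n) (Fin r) ℝ) :
    ‖A‖ ^ 2 = tinner A A := by
  rw [frobenius_norm_def, tinner_eq_sum, ← Real.rpow_natCast _ 2, ← Real.rpow_mul (by positivity)]
  norm_num
  rw [Finset.sum_comm]
  congr 1 with i; congr 1 with j
  ring

lemma tinner_le_norm (A B : Matrix (Fin n) (Fin r) ℝ) :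
    tinner A B ≤ ‖A‖ * ‖B‖ := by
  have hA : (0:ℝ) ≤ ‖A‖ * ‖B‖ := by positivity
  have key : (tinner A B) ^ 2 ≤ (‖A‖ * ‖B‖) ^ 2 := by
    rw [mul_pow, norm_sq_eq_tinner, norm_sq_eq_tinner]
    have := Finset.sum_mul_sq_le_sq_mul_sq Finset.univ
      (fun p : Fin r × Fin n => A p.2 p.1) (fun p : Fin r × Fin n => B p.2 p.1)
    simpa [tinner_eq_sum, ← Finset.sum_product', Finset.sum_product, sq] using this
  calc tinner A B ≤ |tinner A B| := le_abs_self _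
    _ ≤ ‖A‖ * ‖B‖ := by
        rw [← Real.sqrt_sq hA, ← Real.sqrt_sq_eq_abs]
        exact Real.sqrt_le_sqrt key

lemma isTangent_smul {X V : Matrix (Fin n) (Fin r) ℝ} (c : ℝ) (hV : IsTangent X V) :
    IsTangent X (c • V) := by
  unfold IsTangent at *
  rw [Matrix.transpose_smul, Matrix.smul_mul, Matrix.mul_smul, ← smul_add, hV, smul_zero]

lemma tinner_sub_left (A B C : Matrix (Fin n) (Fin r) ℝ) :
    tinner (A - B) C = tinner A C - tinner B C := by
  simp [tinner_eq_sum, Matrix.sub_apply, sub_mul, Finset.sum_sub_distrib]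

lemma abs_tinner_le (A B : Matrix (Fin n) (Fin r) ℝ) :
    |tinner A B| ≤ ‖A‖ * ‖B‖ := by
  rcases abs_cases (tinner A B) with ⟨he, _⟩ | ⟨he, _⟩
  · rw [he]; exact tinner_le_norm A B
  · rw [he]
    have : -tinner A B = tinner ((-1 : ℝ) • A) B := by rw [tinner_smul_left]; ring
    rw [this]
    calc tinner ((-1 : ℝ) • A) B ≤ ‖(-1 : ℝ) • A‖ * ‖B‖ := tinner_le_norm _ _
      _ = ‖A‖ * ‖B‖ := by rw [norm_smul]; simp

lemma descent_lemma (f : Matrix (Fin n) (Fin r) ℝ → ℝ)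
    (g : Matrix (Fin n) (Fin r) ℝ → Matrix (Fin n) (Fin r) ℝ)
    (Lf : Matrix (Fin n) (Fin r) ℝ → (Matrix (Fin n) (Fin r) ℝ →L[ℝ] ℝ))
    (hf : ∀ Z, HasFDerivAt f (Lf Z) Z) (hGrad : ∀ Z V, Lf Z V = tinner (g Z) V)
    (L : ℝ) (hLipg : ∀ A B, ‖g A - g B‖ ≤ L * ‖A - B‖)
    (x v : Matrix (Fin n) (Fin r) ℝ) :
    f (x + v) ≤ f x + tinner (g x) v + L / 2 * ‖v‖ ^ 2 := by
  set D : ℝ → ℝ := fun t => tinner (g (x + t • v)) v with hD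
  have hφd : ∀ t : ℝ, HasDerivAt (fun t : ℝ => f (x + t • v)) (D t) t := by
    intro t
    have h1 : HasDerivAt (fun t : ℝ => x + t • v) v t := by
      have := ((hasDerivAt_id' t).smul_const v).const_add x
      rwa [one_smul] at this
    have h2 := (hf (x + t • v)).comp_hasDerivAt t h1
    have h3 : HasDerivAt (fun t : ℝ => f (x + t • v)) (Lf (x + t • v) v) t := h2
    rw [hGrad] at h3
    exact h3
  have hDdiff : ∀ s t : ℝ, |D t - D s| ≤ L * ‖v‖ ^ 2 * |t - s| := by
    intro s t
    have : D t - D s = tinner (g (x + t • v) - g (x + s • v)) v := by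
      rw [tinner_sub_left]
    rw [this]
    calc |tinner (g (x + t • v) - g (x + s • v)) v|
        ≤ ‖g (x + t • v) - g (x + s • v)‖ * ‖v‖ := abs_tinner_le _ _
      _ ≤ (L * ‖x + t • v - (x + s • v)‖) * ‖v‖ :=
          mul_le_mul_of_nonneg_right (hLipg _ _) (norm_nonneg _)
      _ = L * ‖v‖ ^ 2 * |t - s| := by
          have : x + t • v - (x + s • v) = (t - s) • v := by
            rw [sub_smul]; abel
          rw [this, norm_smul]
          simp [Real.norm_eq_abs]
          ring
  have hDcont : Continuous D := by
    apply LipschitzWith.continuous (K := Real.toNNReal (L * ‖v‖ ^ 2))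
    apply LipschitzWith.of_dist_le_mul
    intro t s
    rw [Real.dist_eq, Real.dist_eq]
    calc |D t - D s| ≤ L * ‖v‖ ^ 2 * |t - s| := hDdiff s t
      _ ≤ Real.toNNReal (L * ‖v‖ ^ 2) * |t - s| :=
          mul_le_mul_of_nonneg_right (Real.le_coe_toNNReal _) (abs_nonneg _)
  have key : ∫ t in (0:ℝ)..1, D t = f (x + v) - f x := by
    have := intervalIntegral.integral_eq_sub_of_hasDerivAt
      (f := fun t : ℝ => f (x + t • v)) (f' := D)
      (fun t _ => hφd t) (hDcont.intervalIntegrable 0 1)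
    simpa using this
  have hb : ∀ t ∈ Set.Icc (0:ℝ) 1, D t ≤ D 0 + L * ‖v‖ ^ 2 * t := by
    intro t ht
    have := hDdiff 0 t
    rw [sub_zero, abs_of_nonneg ht.1] at this
    have h2 := (abs_le.mp ((sub_zero t ▸ this : |D t - D 0| ≤ L * ‖v‖ ^ 2 * t))).2
    linarith
  have hmono : ∫ t in (0:ℝ)..1, D t ≤ ∫ t in (0:ℝ)..1, (D 0 + L * ‖v‖ ^ 2 * t) := by
    apply intervalIntegral.integral_mono_on (by norm_num)
      (hDcont.intervalIntegrable 0 1)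
      ((continuous_const.add (continuous_const.mul continuous_id')).intervalIntegrable 0 1)
      hb
  have hval : ∫ t in (0:ℝ)..1, (D 0 + L * ‖v‖ ^ 2 * t) = D 0 + L / 2 * ‖v‖ ^ 2 := by
    rw [intervalIntegral.integral_add (intervalIntegrable_const)
      (show IntervalIntegrable (fun t : ℝ => L * ‖v‖ ^ 2 * t) MeasureTheory.volume 0 1 from
        (continuous_const.mul continuous_id').intervalIntegrable 0 1),
      intervalIntegral.integral_const_mul, integral_id]
    simp
    ring
  have hD0 : D 0 = tinner (g x) v := by simp [hD]
  linarith [hmono, hval, key, hD0.symm ▸ (le_refl (D 0))]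

lemma convex_step (h : Matrix (Fin n) (Fin r) ℝ → ℝ) (hconv : ConvexOn ℝ Set.univ h)
    (X V : Matrix (Fin n) (Fin r) ℝ) {β : ℝ} (hβ0 : 0 ≤ β) (hβ1 : β ≤ 1) :
    h (X + β • V) ≤ (1 - β) * h X + β * h (X + V) := by
  have hE : (1 - β) • X + β • (X + V) = X + β • V := by module
  have := hconv.2 (Set.mem_univ X) (Set.mem_univ (X + V))
    (show (0:ℝ) ≤ 1 - β by linarith) hβ0 (by ring)
  rw [hE] at this
  simpa [smul_eq_mul] using this


set_option maxHeartbeats 1000000 in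
theorem stmt4 {n r : ℕ} (X : Matrix (Fin n) (Fin r) ℝ) (hX : Xᵀ * X = 1)
    (f h : Matrix (Fin n) (Fin r) ℝ → ℝ)
    -- `f` is differentiable with gradient function `g = ∇f`, which is `L`-Lipschitz
    (g : Matrix (Fin n) (Fin r) ℝ → Matrix (Fin n) (Fin r) ℝ)
    (Lf : Matrix (Fin n) (Fin r) ℝ → (Matrix (Fin n) (Fin r) ℝ →L[ℝ] ℝ))
    (hf : ∀ Z, HasFDerivAt f (Lf Z) Z) (hGrad : ∀ Z V, Lf Z V = tinner (g Z) V)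
    (L Lh ϱ M₁ M₂ κ₁ σ : ℝ)
    (hLipg : ∀ A B, ‖g A - g B‖ ≤ L * ‖A - B‖)
    (hgX : ‖g X‖ ≤ ϱ)
    -- `h` is convex and `L_h`-Lipschitz
    (hconv : ConvexOn ℝ Set.univ h)
    (hLiph : ∀ A B, |h A - h B| ≤ Lh * ‖A - B‖)
    (hM₁ : 0 < M₁) (hM₂ : 0 < M₂) (hκ₁ : 0 < κ₁) (hσ : σ ∈ Set.Ioo (0 : ℝ) 1)
    -- `B` is linear, self-adjoint for the trace inner product, maps `T_X` into itself,
    -- and satisfies `⟨V,BV⟩ ≥ κ₁‖V‖²` on `T_X`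
    (B : Matrix (Fin n) (Fin r) ℝ →ₗ[ℝ] Matrix (Fin n) (Fin r) ℝ)
    (hBsa : ∀ U V, tinner U (B V) = tinner (B U) V)
    (hBtan : ∀ V, IsTangent X V → IsTangent X (B V))
    (hBlow : ∀ V, IsTangent X V → κ₁ * ‖V‖ ^ 2 ≤ tinner V (B V))
    -- the objective `φ(V) = ⟨∇f(X),V⟩ + (1/2)⟨V,BV⟩ + h(X+V)` and its minimizer `V*` over `T_X`
    (φ : Matrix (Fin n) (Fin r) ℝ → ℝ)
    (hφ : ∀ V, φ V = tinner (g X) V + (1 / 2) * tinner V (B V) + h (X + V))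
    (Vs : Matrix (Fin n) (Fin r) ℝ) (hVs : IsTangent X Vs)
    (hmin : ∀ V, IsTangent X V → φ Vs ≤ φ V)
    -- the retraction-like map `R`
    (R : Matrix (Fin n) (Fin r) ℝ → Matrix (Fin n) (Fin r) ℝ)
    (hR1 : ∀ ξ, IsTangent X ξ → ‖R ξ - X‖ ≤ M₁ * ‖ξ‖)
    (hR2 : ∀ ξ, IsTangent X ξ → ‖R ξ - X - ξ‖ ≤ M₂ * ‖ξ‖ ^ 2) :
    ∀ α : ℝ, 0 < α →
      α ≤ min 1 ((2 - σ) * κ₁ / (2 * (ϱ * M₂ + (1 / 2) * L * M₁ ^ 2 + Lh * M₂))) →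
      f (R (α • Vs)) + h (R (α • Vs)) ≤ f X + h X - σ * α / 2 * tinner Vs (B Vs) := by
  intro α hα0 hαle
  obtain ⟨hσ0, hσ1⟩ := hσ
  set c₂ : ℝ := ϱ * M₂ + (1 / 2) * L * M₁ ^ 2 + Lh * M₂ with hc₂
  have hα1 : α ≤ 1 := le_trans hαle (min_le_left _ _)
  have hα2 : α ≤ (2 - σ) * κ₁ / (2 * c₂) := le_trans hαle (min_le_right _ _)
  set Q : ℝ := tinner Vs (B Vs) with hQ
  have hQκ : κ₁ * ‖Vs‖ ^ 2 ≤ Q := hBlow Vs hVs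
  have hQ0 : 0 ≤ Q := le_trans (by positivity) hQκ
  -- Step 1: key inequality for the minimizer
  have keyA : ∀ β : ℝ, 0 < β → β < 1 →
      tinner (g X) Vs + h (X + Vs) - h X ≤ -((1 + β) / 2) * Q := by
    intro β hb0 hb1
    have ht := hmin (β • Vs) (isTangent_smul β hVs)
    rw [hφ, hφ] at ht
    rw [LinearMap.map_smul, tinner_smul_right, tinner_smul_left, tinner_smul_right] at ht
    have hcvx := convex_step h hconv X Vs hb0.le hb1.le
    nlinarith [ht, hcvx, sub_pos.2 hb1]
  have keyA' : tinner (g X) Vs + h (X + Vs) - h X ≤ -Q := by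
    obtain ⟨A, hA⟩ : ∃ A, A = tinner (g X) Vs + h (X + Vs) - h X := ⟨_, rfl⟩
    rw [← hA] at keyA ⊢
    by_contra hc
    push_neg at hc
    rcases eq_or_lt_of_le hQ0 with hQeq | hQpos
    · have := keyA (1/2) (by norm_num) (by norm_num)
      rw [← hQeq] at this hc
      linarith
    · set m : ℝ := min (1/2) ((A + Q) / Q) with hm
      have hεpos : 0 < A + Q := by linarith
      have hm0 : 0 < m := lt_min (by norm_num) (div_pos hεpos hQpos)
      have hmhalf : m ≤ 1/2 := min_le_left _ _
      have hβ0 : 0 < 1 - m := by linarith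
      have hβ1 : 1 - m < 1 := by linarith
      have hk := keyA (1 - m) hβ0 hβ1
      have h2 : m * Q ≤ A + Q := by
        calc m * Q ≤ ((A + Q) / Q) * Q := mul_le_mul_of_nonneg_right (min_le_right _ _) hQ0
          _ = A + Q := by field_simp
      nlinarith [hk, h2]
  -- Step 2
  rcases subsingleton_or_nontrivial (Matrix (Fin n) (Fin r) ℝ) with hsub | hnt
  · have hVs0 : Vs = 0 := Subsingleton.elim _ _
    have hRX : R (α • Vs) = X := Subsingleton.elim _ _
    have hB0 : Q = 0 := by
      rw [hQ, hVs0, map_zero]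
      simp [tinner_eq_sum]
    rw [hRX, hB0]
    simp
  · obtain ⟨P, P', hPP⟩ := exists_pair_ne (Matrix (Fin n) (Fin r) ℝ)
    have hnPP : 0 < ‖P - P'‖ := by rw [norm_pos_iff]; exact sub_ne_zero.2 hPP
    have hL0 : 0 ≤ L := by nlinarith [hLipg P P', norm_nonneg (g P - g P')]
    have hLh0 : 0 ≤ Lh := by nlinarith [hLiph P P', abs_nonneg (h P - h P')]
    have hϱ0 : 0 ≤ ϱ := le_trans (norm_nonneg _) hgX
    have hc₂0 : 0 ≤ c₂ := by rw [hc₂]; positivity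
    rcases eq_or_lt_of_le hc₂0 with hc2eq | hc2pos
    · exfalso
      rw [← hc2eq] at hα2
      simp at hα2
      linarith
    · set ξ : Matrix (Fin n) (Fin r) ℝ := α • Vs with hξ
      have hξt : IsTangent X ξ := isTangent_smul α hVs
      have hnξ : ‖ξ‖ = α * ‖Vs‖ := by
        rw [hξ, norm_smul, Real.norm_eq_abs, abs_of_pos hα0]
      set Y : Matrix (Fin n) (Fin r) ℝ := R ξ with hY
      have hf1 : f Y ≤ f X + tinner (g X) (Y - X) + L / 2 * ‖Y - X‖ ^ 2 := by
        have := descent_lemma f g Lf hf hGrad L hLipg X (Y - X)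
        simpa using this
      have hsplit : tinner (g X) (Y - X) = tinner (g X) (Y - X - ξ) + α * tinner (g X) Vs := by
        calc tinner (g X) (Y - X) = tinner (g X) ((Y - X - ξ) + ξ) := by
              rw [show Y - X - ξ + ξ = Y - X from by abel]
          _ = tinner (g X) (Y - X - ξ) + tinner (g X) ξ := tinner_add_right _ _ _
          _ = tinner (g X) (Y - X - ξ) + α * tinner (g X) Vs := by
              rw [hξ, tinner_smul_right]
      have h3 : tinner (g X) (Y - X - ξ) ≤ ϱ * (M₂ * ‖ξ‖ ^ 2) := by
        calc tinner (g X) (Y - X - ξ) ≤ ‖g X‖ * ‖Y - X - ξ‖ := tinner_le_norm _ _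
          _ ≤ ϱ * (M₂ * ‖ξ‖ ^ 2) :=
            mul_le_mul hgX (hR2 ξ hξt) (norm_nonneg _) hϱ0
      have h4 : ‖Y - X‖ ^ 2 ≤ M₁ ^ 2 * ‖ξ‖ ^ 2 := by
        have := pow_le_pow_left₀ (norm_nonneg (Y - X)) (hR1 ξ hξt) 2
        calc ‖Y - X‖ ^ 2 ≤ (M₁ * ‖ξ‖) ^ 2 := this
          _ = M₁ ^ 2 * ‖ξ‖ ^ 2 := by ring
      have h5 : h Y - h (X + ξ) ≤ Lh * (M₂ * ‖ξ‖ ^ 2) := by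
        calc h Y - h (X + ξ) ≤ |h Y - h (X + ξ)| := le_abs_self _
          _ ≤ Lh * ‖Y - (X + ξ)‖ := hLiph _ _
          _ = Lh * ‖Y - X - ξ‖ := by rw [sub_add_eq_sub_sub]
          _ ≤ Lh * (M₂ * ‖ξ‖ ^ 2) := mul_le_mul_of_nonneg_left (hR2 ξ hξt) hLh0
      have h6 : h (X + ξ) ≤ (1 - α) * h X + α * h (X + Vs) :=
        convex_step h hconv X Vs hα0.le hα1
      have hLterm : L / 2 * ‖Y - X‖ ^ 2 ≤ L / 2 * (M₁ ^ 2 * ‖ξ‖ ^ 2) :=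
        mul_le_mul_of_nonneg_left h4 (by linarith)
      have hcomb : f Y + h Y ≤ f X + h X +
          α * (tinner (g X) Vs + h (X + Vs) - h X) + c₂ * ‖ξ‖ ^ 2 := by
        rw [hc₂]
        linarith [hf1, hsplit, h3, h5, h6, hLterm]
      have hnξ2 : ‖ξ‖ ^ 2 = α ^ 2 * ‖Vs‖ ^ 2 := by rw [hnξ]; ring
      have e1 : α * (tinner (g X) Vs + h (X + Vs) - h X) ≤ α * (-Q) :=
        mul_le_mul_of_nonneg_left keyA' hα0.le
      have e2 : α * (2 * c₂) ≤ (2 - σ) * κ₁ := (le_div_iff₀ (by linarith)).mp hα2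
      have hN0 : (0:ℝ) ≤ ‖Vs‖ ^ 2 := by positivity
      have hfinal : α * (tinner (g X) Vs + h (X + Vs) - h X) + c₂ * ‖ξ‖ ^ 2 ≤
          -(σ * α / 2) * Q := by
        rw [hnξ2]
        have hσ2 : (0:ℝ) ≤ 2 - σ := by linarith
        have m1 := mul_le_mul_of_nonneg_right e2 (mul_nonneg hα0.le hN0)
        have m2 := mul_le_mul_of_nonneg_left hQκ (mul_nonneg hα0.le hσ2)
        clear_value Q c₂ ξ
        linarith [e1, m1, m2]
      clear_value Q c₂ ξ Y
      linarith [hcomb, hfinal]
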